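/- arXiv:2510.15230 — 3 statements merged into one kernel-verified Lean document; each statement's English description precedes it below -/
import Mathlib

section
/- Let M be a right-bounded chain complex of R-modules (M_i = 0 for all i ≪ 0). If for every i the modules H_i(M) and M_i have finite projective dimension, then for every i the modules B_i(M) = im(∂_{i+1}), Z_i(M) = ker(∂_i), and C_i(M) = M_i/B_i(M) all have finite projective dimension. -/
universe u

open CategoryTheory CategoryTheory.Limits CategoryTheory.Abelian

noncomputable instance hasDerCatModule (R : Type u) [CommRing R] :
    HasDerivedCategory.{u+1} (ModuleCat.{u} R) :=
  HasDerivedCategory.standard _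

instance hasExtModule (R : Type u) [CommRing R] : HasExt.{u+1} (ModuleCat.{u} R) :=
  hasExt_of_hasDerivedCategory _

/-- Projective dimension of a module, valued in `ℕ∞`, via vanishing of `Ext`. -/
noncomputable def projDim (R : Type u) [CommRing R] (M : Type u) [AddCommGroup M]
    [Module R M] : ℕ∞ :=
  sInf {n : ℕ∞ | ∀ (N : Type u) [AddCommGroup N] [Module R N] (i : ℕ), n < (i : ℕ∞) →
    Subsingleton (Abelian.Ext (ModuleCat.of R M) (ModuleCat.of R N) i)}

variable (R : Type u) [CommRing R]

/-- The boundary submodule `B_i(M) = im (∂_{i+1})` of a chain complex. -/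
noncomputable def bdries (M : ChainComplex (ModuleCat.{u} R) ℤ) (i : ℤ) :
    Submodule R (M.X i) :=
  LinearMap.range (M.d (i + 1) i).hom

/-- The cycle submodule `Z_i(M) = ker (∂_i)` of a chain complex. -/
noncomputable def cycs (M : ChainComplex (ModuleCat.{u} R) ℤ) (i : ℤ) :
    Submodule R (M.X i) :=
  LinearMap.ker (M.d i (i - 1)).hom

/-- The homology module `H_i(M) = Z_i(M)/B_i(M)`. -/
noncomputable def homol (M : ChainComplex (ModuleCat.{u} R) ℤ) (i : ℤ) : Type u :=
  cycs R M i ⧸ (Submodule.comap (cycs R M i).subtype (bdries R M i))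

noncomputable instance (M : ChainComplex (ModuleCat.{u} R) ℤ) (i : ℤ) :
    AddCommGroup (homol R M i) := by unfold homol; infer_instance

noncomputable instance (M : ChainComplex (ModuleCat.{u} R) ℤ) (i : ℤ) :
    Module R (homol R M i) := by unfold homol; infer_instance

section Helpers

variable {R}

/-- Finite projective dimension, phrased as eventual vanishing of `Ext`. -/
def modFPD (X : ModuleCat.{u} R) : Prop :=
  ∃ n : ℕ, ∀ (N : ModuleCat.{u} R) (i : ℕ), n < i → Subsingleton (Abelian.Ext X N i)

lemma subsingleton_of_all_eq_zero {X N : ModuleCat.{u} R} {i : ℕ}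
    (h : ∀ x : Abelian.Ext X N i, x = 0) : Subsingleton (Abelian.Ext X N i) :=
  ⟨fun a b => by rw [h a, h b]⟩

lemma modFPD_of_subsingleton (X : ModuleCat.{u} R) [Subsingleton X] : modFPD X := by
  refine ⟨0, fun N i _ => subsingleton_of_all_eq_zero fun x => ?_⟩
  have hX : IsZero X := ModuleCat.isZero_of_subsingleton X
  have h1 : (𝟙 X) = 0 := hX.eq_of_src _ _
  calc x = (Ext.mk₀ (𝟙 X)).comp x (zero_add i) := (Ext.mk₀_id_comp x).symm
  _ = 0 := by rw [h1, Ext.mk₀_zero, Ext.zero_comp]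

lemma modFPD_of_iso {X X' : ModuleCat.{u} R} (α : X ≅ X') (h : modFPD X) : modFPD X' := by
  obtain ⟨n, h⟩ := h
  refine ⟨n, fun N i hi => ?_⟩
  haveI := h N i hi
  refine subsingleton_of_all_eq_zero fun x => ?_
  have h1 : (Ext.mk₀ α.hom).comp x (zero_add i) = 0 := Subsingleton.elim _ _
  calc x = (Ext.mk₀ (𝟙 X')).comp x (zero_add i) := (Ext.mk₀_id_comp x).symm
  _ = (Ext.mk₀ (α.inv ≫ α.hom)).comp x (zero_add i) := by rw [Iso.inv_hom_id]
  _ = (Ext.mk₀ α.inv).comp ((Ext.mk₀ α.hom).comp x (zero_add i)) (zero_add i) :=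
      (Ext.mk₀_comp_mk₀_assoc _ _ _).symm
  _ = 0 := by rw [h1, Ext.comp_zero]

lemma modFPD_congr {A B : Type u} [AddCommGroup A] [Module R A] [AddCommGroup B] [Module R B]
    (e : A ≃ₗ[R] B) (h : modFPD (ModuleCat.of R A)) : modFPD (ModuleCat.of R B) :=
  modFPD_of_iso e.toModuleIso h

lemma projDim_ne_top_iff (A : Type u) [AddCommGroup A] [Module R A] :
    projDim R A ≠ ⊤ ↔ modFPD (ModuleCat.of R A) := by
  constructor
  · intro h
    rw [projDim, Ne, sInf_eq_top] at h
    push_neg at h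
    obtain ⟨m, hm, hm'⟩ := h
    refine ⟨m.toNat, fun N i hi => ?_⟩
    have hlt : m < (i : ℕ∞) := by
      rw [← ENat.coe_toNat hm']
      exact_mod_cast hi
    exact hm (↥N) i hlt
  · rintro ⟨n, hn⟩
    have hmem : (n : ℕ∞) ∈ {m : ℕ∞ | ∀ (N : Type u) [AddCommGroup N] [Module R N] (i : ℕ),
        m < (i : ℕ∞) → Subsingleton (Abelian.Ext (ModuleCat.of R A) (ModuleCat.of R N) i)} := by
      intro N _ _ i hi
      exact hn (ModuleCat.of R N) i (by exact_mod_cast hi)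
    exact ((sInf_le hmem).trans_lt (WithTop.coe_lt_top n)).ne

lemma modFPD_left {S : ShortComplex (ModuleCat.{u} R)} (hS : S.ShortExact)
    (h₂ : modFPD S.X₂) (h₃ : modFPD S.X₃) : modFPD S.X₁ := by
  obtain ⟨n₂, h₂⟩ := h₂
  obtain ⟨n₃, h₃⟩ := h₃
  refine ⟨max n₂ n₃, fun N i hi => subsingleton_of_all_eq_zero fun x => ?_⟩
  have hz : hS.extClass.comp x rfl = 0 := by
    haveI := h₃ N (1 + i) (by omega)
    exact Subsingleton.elim _ _
  obtain ⟨x₂, hx₂⟩ := Ext.contravariant_sequence_exact₁ hS N x rfl hz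
  haveI := h₂ N i (by omega)
  have hx0 : x₂ = 0 := Subsingleton.elim _ _
  rw [← hx₂, hx0, Ext.comp_zero]

lemma modFPD_right {S : ShortComplex (ModuleCat.{u} R)} (hS : S.ShortExact)
    (h₁ : modFPD S.X₁) (h₂ : modFPD S.X₂) : modFPD S.X₃ := by
  obtain ⟨n₁, h₁⟩ := h₁
  obtain ⟨n₂, h₂⟩ := h₂
  refine ⟨max (n₁ + 1) n₂, fun N i hi => ?_⟩
  obtain ⟨n₀, rfl⟩ : ∃ n₀, i = 1 + n₀ := ⟨i - 1, by omega⟩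
  refine subsingleton_of_all_eq_zero fun x => ?_
  have hg : (Ext.mk₀ S.g).comp x (zero_add _) = 0 := by
    haveI := h₂ N (1 + n₀) (by omega)
    exact Subsingleton.elim _ _
  obtain ⟨x₁, hx₁⟩ := Ext.contravariant_sequence_exact₃ hS N x hg rfl
  haveI := h₁ N n₀ (by omega)
  have hx0 : x₁ = 0 := Subsingleton.elim _ _
  rw [← hx₁, hx0, Ext.comp_zero]

/-- The short exact sequence `0 → p → A → A/p → 0`. -/
noncomputable def subQuotSES {A : Type u} [AddCommGroup A] [Module R A]
    (p : Submodule R A) : ShortComplex (ModuleCat.{u} R) :=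
  ShortComplex.moduleCatMk p.subtype p.mkQ
    (by ext x; simpa using (Submodule.Quotient.mk_eq_zero p).mpr x.2)

lemma subQuotSES_shortExact {A : Type u} [AddCommGroup A] [Module R A]
    (p : Submodule R A) : (subQuotSES p).ShortExact := by
  haveI : Mono (subQuotSES p).f :=
    (ModuleCat.mono_iff_injective _).mpr p.injective_subtype
  haveI : Epi (subQuotSES p).g :=
    (ModuleCat.epi_iff_surjective _).mpr p.mkQ_surjective
  exact ⟨(ShortComplex.moduleCat_exact_iff _).mpr fun x hx =>
    ⟨⟨x, (Submodule.Quotient.mk_eq_zero p).mp hx⟩, rfl⟩⟩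

end Helpers

section Keys

variable {R}

lemma bdries_eq_range (M : ChainComplex (ModuleCat.{u} R) ℤ) (i j : ℤ) (h : j + 1 = i) :
    bdries R M j = LinearMap.range (M.d i j).hom := by
  subst h
  rfl

/-- The short exact sequence `0 → Z_i → M_i → B_{i-1} → 0`. -/
noncomputable def zSES (M : ChainComplex (ModuleCat.{u} R) ℤ) (i : ℤ) :
    ShortComplex (ModuleCat.{u} R) :=
  ShortComplex.moduleCatMk (cycs R M i).subtype
    (LinearMap.codRestrict (bdries R M (i - 1)) (M.d i (i - 1)).hom (fun x =>
      (bdries_eq_range M i (i - 1) (by ring)).ge (LinearMap.mem_range_self _ x)))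
    (by ext x; simp [LinearMap.codRestrict]; exact x.2)

lemma zSES_shortExact (M : ChainComplex (ModuleCat.{u} R) ℤ) (i : ℤ) :
    (zSES M i).ShortExact := by
  haveI : Mono (zSES M i).f :=
    (ModuleCat.mono_iff_injective _).mpr (cycs R M i).injective_subtype
  haveI : Epi (zSES M i).g := by
    refine (ModuleCat.epi_iff_surjective _).mpr fun y => ?_
    obtain ⟨x, hx⟩ := (bdries_eq_range M i (i - 1) (by ring)).le y.2
    exact ⟨x, Subtype.ext hx⟩
  refine ⟨(ShortComplex.moduleCat_exact_iff _).mpr fun x hx => ?_⟩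
  have hx' : (M.d i (i - 1)).hom x = 0 := congrArg Subtype.val hx
  exact ⟨⟨x, hx'⟩, rfl⟩

lemma key1 (M : ChainComplex (ModuleCat.{u} R) ℤ) (i : ℤ)
    (hB : modFPD (ModuleCat.of R (bdries R M (i - 1))))
    (hM : modFPD (ModuleCat.of R (M.X i))) :
    modFPD (ModuleCat.of R (cycs R M i)) :=
  modFPD_left (zSES_shortExact M i) hM hB

lemma bdries_le_cycs (M : ChainComplex (ModuleCat.{u} R) ℤ) (i : ℤ) :
    bdries R M i ≤ cycs R M i := by
  intro x hx
  simp only [bdries, LinearMap.mem_range] at hx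
  obtain ⟨y, rfl⟩ := hx
  simp only [cycs, LinearMap.mem_ker]
  have h : M.d (i + 1) i ≫ M.d i (i - 1) = 0 := M.d_comp_d _ _ _
  calc (M.d i (i - 1)) ((M.d (i + 1) i) y) = (M.d (i + 1) i ≫ M.d i (i - 1)) y := rfl
  _ = (0 : M.X (i + 1) ⟶ M.X (i - 1)) y := by rw [h]
  _ = 0 := rfl

lemma key2 (M : ChainComplex (ModuleCat.{u} R) ℤ) (i : ℤ)
    (hZ : modFPD (ModuleCat.of R (cycs R M i)))
    (hH : modFPD (ModuleCat.of R (homol R M i))) :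
    modFPD (ModuleCat.of R (bdries R M i)) := by
  have h := modFPD_left
    (subQuotSES_shortExact (Submodule.comap (cycs R M i).subtype (bdries R M i))) hZ hH
  exact modFPD_congr (Submodule.comapSubtypeEquivOfLe (bdries_le_cycs M i)) h

lemma key3 (M : ChainComplex (ModuleCat.{u} R) ℤ) (i : ℤ)
    (hB : modFPD (ModuleCat.of R (bdries R M i)))
    (hM : modFPD (ModuleCat.of R (M.X i))) :
    modFPD (ModuleCat.of R ((M.X i) ⧸ (bdries R M i))) :=
  modFPD_right (subQuotSES_shortExact (bdries R M i)) hB hM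

end Keys

/-- Let `M` be a right-bounded chain complex of modules over a commutative
noetherian ring `R`. If every `H_i(M)` and every `M_i` has finite projective dimension, then
every `B_i(M)`, `Z_i(M)` and `C_i(M) = M_i/B_i(M)` has finite projective dimension. -/
theorem projDim_cycles_bdries_coker_finite [IsNoetherianRing R]
    (M : ChainComplex (ModuleCat.{u} R) ℤ)
    (hbdd : ∃ n₀ : ℤ, ∀ i < n₀, Subsingleton (M.X i))
    (hH : ∀ i, projDim R (homol R M i) ≠ ⊤)
    (hX : ∀ i, projDim R (M.X i) ≠ ⊤) :
    ∀ i, projDim R (bdries R M i) ≠ ⊤ ∧ projDim R (cycs R M i) ≠ ⊤ ∧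
      projDim R ((M.X i) ⧸ (bdries R M i)) ≠ ⊤ := by
  obtain ⟨n₀, hn₀⟩ := hbdd
  have hXf : ∀ i, modFPD (ModuleCat.of R (M.X i)) :=
    fun i => (projDim_ne_top_iff _).mp (hX i)
  have hHf : ∀ i, modFPD (ModuleCat.of R (homol R M i)) :=
    fun i => (projDim_ne_top_iff _).mp (hH i)
  have hB0 : ∀ i, i < n₀ → modFPD (ModuleCat.of R (bdries R M i)) := by
    intro i hi
    haveI := hn₀ i hi
    haveI : Subsingleton (ModuleCat.of R ↥(bdries R M i)) :=
      ⟨fun a b => Subtype.ext (Subsingleton.elim (α := M.X i) _ _)⟩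
    exact modFPD_of_subsingleton _
  have hBall : ∀ i, modFPD (ModuleCat.of R (bdries R M i)) := by
    have H : ∀ k : ℕ, ∀ i : ℤ, i < n₀ + k → modFPD (ModuleCat.of R (bdries R M i)) := by
      intro k
      induction k with
      | zero => intro i hi; exact hB0 i (by omega)
      | succ k ih =>
        intro i hi
        rcases lt_or_ge i (n₀ + k) with h | h
        · exact ih i h
        · exact key2 M i (key1 M i (ih (i - 1) (by omega)) (hXf i)) (hHf i)
    intro i
    exact H (i - n₀ + 1).toNat i (by omega)
  intro i
  refine ⟨(projDim_ne_top_iff _).mpr (hBall i),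
    (projDim_ne_top_iff _).mpr (key1 M i (hBall (i - 1)) (hXf i)),
    (projDim_ne_top_iff _).mpr (key3 M i (hBall i) (hXf i))⟩
end

section
/- Let M be a right-bounded chain complex of R-modules (M_i = 0 for all i ≪ 0). If for every i the modules H_i(M) and M_i have finite flat dimension, then for every i the modules B_i(M), Z_i(M), and C_i(M) = M_i/B_i(M) all have finite flat dimension. -/
universe u

open CategoryTheory CategoryTheory.Limits

/-- Flat dimension (Tor-dimension) of a module, valued in `ℕ∞`, via vanishing of `Tor`. -/
noncomputable def flatDim (R : Type u) [CommRing R] (M : Type u) [AddCommGroup M]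
    [Module R M] : ℕ∞ :=
  sInf {n : ℕ∞ | ∀ (N : Type u) [AddCommGroup N] [Module R N] (i : ℕ), n < (i : ℕ∞) →
    Subsingleton (((Tor (ModuleCat.{u} R) i).obj (ModuleCat.of R M)).obj (ModuleCat.of R N))}

variable (R : Type u) [CommRing R]

/-! ### Auxiliary material -/

namespace FlatDimAux

open CategoryTheory.MonoidalCategory

variable {R}

/-- Finite flat dimension, expressed by vanishing of high enough `Tor`s. -/
def FFD (R : Type u) [CommRing R] (M : Type u) [AddCommGroup M] [Module R M] : Prop :=
  ∃ n : ℕ, ∀ (N : Type u) [AddCommGroup N] [Module R N] (i : ℕ), n < i →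
    Subsingleton (((Tor (ModuleCat.{u} R) i).obj (ModuleCat.of R M)).obj (ModuleCat.of R N))

lemma flatDim_ne_top_iff {M : Type u} [AddCommGroup M] [Module R M] :
    flatDim R M ≠ ⊤ ↔ FFD R M := by
  unfold flatDim
  constructor
  · intro h
    obtain ⟨a, ha, hne⟩ : ∃ a ∈ {n : ℕ∞ | ∀ (N : Type u) [AddCommGroup N] [Module R N] (i : ℕ),
        n < (i : ℕ∞) → Subsingleton (((Tor (ModuleCat.{u} R) i).obj (ModuleCat.of R M)).obj
          (ModuleCat.of R N))}, a ≠ ⊤ := by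
      by_contra hc
      push_neg at hc
      exact h (sInf_eq_top.mpr hc)
    lift a to ℕ using hne
    exact ⟨a, fun N _ _ i hi => ha N i (by exact_mod_cast hi)⟩
  · rintro ⟨n, hn⟩
    have hmem : (n : ℕ∞) ∈ {m : ℕ∞ | ∀ (N : Type u) [AddCommGroup N] [Module R N] (i : ℕ),
        m < (i : ℕ∞) → Subsingleton (((Tor (ModuleCat.{u} R) i).obj (ModuleCat.of R M)).obj
          (ModuleCat.of R N))} := by
      intro N _ _ i hi
      exact hn N i (by exact_mod_cast hi)
    exact (lt_of_le_of_lt (sInf_le hmem) (by simp)).ne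

/-- The complex `X ⊗ P`. -/
noncomputable def tensCx (X : ModuleCat.{u} R) (P : ChainComplex (ModuleCat.{u} R) ℕ) :
    ChainComplex (ModuleCat.{u} R) ℕ :=
  (((tensoringLeft (ModuleCat.{u} R)).obj X).mapHomologicalComplex _).obj P

lemma subsingleton_of_isZero {X : ModuleCat.{u} R} (h : IsZero X) : Subsingleton X := by
  have h0 : (𝟙 X : X ⟶ X) = 0 := h.eq_of_src _ _
  refine ⟨fun a b => ?_⟩
  have ha : a = (0 : X ⟶ X) a := by rw [← h0]; rfl
  have hb : b = (0 : X ⟶ X) b := by rw [← h0]; rfl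
  rw [ha, hb]; simp

/-- `Tor_i(A, N)` vanishes iff the `i`-th homology of `A ⊗ P` vanishes, where `P` is a
projective resolution of `N`. -/
lemma tor_subsingleton_iff {A N : Type u} [AddCommGroup A] [Module R A]
    [AddCommGroup N] [Module R N] (P : ProjectiveResolution (ModuleCat.of R N)) (i : ℕ) :
    Subsingleton (((Tor (ModuleCat.{u} R) i).obj (ModuleCat.of R A)).obj (ModuleCat.of R N)) ↔
      IsZero ((tensCx (ModuleCat.of R A) P.complex).homology i) := by
  have e := P.isoLeftDerivedObj ((tensoringLeft (ModuleCat.{u} R)).obj (ModuleCat.of R A)) i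
  constructor
  · intro h
    exact IsZero.of_iso (@ModuleCat.isZero_of_subsingleton _ _ _ h) e.symm
  · intro h
    exact subsingleton_of_isZero (h.of_iso e)

lemma ffd_aux_subsingleton (M N : Type u) [AddCommGroup M] [Module R M] [Subsingleton M]
    [AddCommGroup N] [Module R N] (i : ℕ) :
    Subsingleton (((Tor (ModuleCat.{u} R) i).obj (ModuleCat.of R M)).obj (ModuleCat.of R N)) := by
  obtain ⟨P⟩ : Nonempty (ProjectiveResolution (ModuleCat.of R N)) := HasProjectiveResolution.out
  refine (tor_subsingleton_iff (A := M) P i).mpr ?_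
  have hz : IsZero (((tensCx (ModuleCat.of R M) P.complex).sc i).X₂) := by
    have : Subsingleton (↥((tensCx (ModuleCat.of R M) P.complex).X i)) := by
      show Subsingleton (TensorProduct R M ↥(P.complex.X i))
      infer_instance
    exact @ModuleCat.isZero_of_subsingleton _ _ _ this
  exact ShortComplex.isZero_homology_of_isZero_X₂ _ hz

lemma ffd_of_subsingleton (M : Type u) [AddCommGroup M] [Module R M] [Subsingleton M] :
    FFD R M :=
  ⟨0, fun N _ _ i _ => ffd_aux_subsingleton M N i⟩

/-- A short exact sequence of modules tensored with a complex `P`. -/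
noncomputable def tensSC (S : ShortComplex (ModuleCat.{u} R))
    (P : ChainComplex (ModuleCat.{u} R) ℕ) :
    ShortComplex (HomologicalComplex (ModuleCat.{u} R) (ComplexShape.down ℕ)) :=
  ShortComplex.mk
    ((NatTrans.mapHomologicalComplex ((tensoringLeft _).map S.f) _).app P)
    ((NatTrans.mapHomologicalComplex ((tensoringLeft _).map S.g) _).app P)
    (by
      ext n x
      have h : (S.f ▷ P.X n) ≫ (S.g ▷ P.X n) = 0 := by
        rw [← MonoidalCategory.comp_whiskerRight, S.zero, MonoidalPreadditive.zero_whiskerRight]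
      have := congr_arg (fun f => ModuleCat.Hom.hom f x) h
      exact this)

/-- If each `P n` is flat, tensoring a short exact sequence with `P` gives a short exact
sequence of complexes. -/
lemma tensSC_shortExact (S : ShortComplex (ModuleCat.{u} R)) (hS : S.ShortExact)
    (P : ChainComplex (ModuleCat.{u} R) ℕ) [∀ n, Module.Flat R ↥(P.X n)] :
    (tensSC S P).ShortExact := by
  apply HomologicalComplex.shortExact_of_degreewise_shortExact
  intro n
  have hf : Function.Injective (S.f.hom.rTensor (P.X n)) :=
    Module.Flat.rTensor_preserves_injective_linearMap _ hS.moduleCat_injective_f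
  have hg : Function.Surjective (S.g.hom.rTensor (P.X n)) :=
    LinearMap.rTensor_surjective _ hS.moduleCat_surjective_g
  have he : Function.Exact (S.f.hom.rTensor (P.X n)) (S.g.hom.rTensor (P.X n)) :=
    Module.Flat.rTensor_exact (↥(P.X n))
      ((ShortComplex.ShortExact.moduleCat_exact_iff_function_exact S).mp hS.exact)
  have hm : Mono ((tensSC S P).map (HomologicalComplex.eval _ _ n)).f :=
    (ModuleCat.mono_iff_injective _).mpr hf
  have hepi : Epi ((tensSC S P).map (HomologicalComplex.eval _ _ n)).g :=
    (ModuleCat.epi_iff_surjective _).mpr hg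
  exact { exact := (ShortComplex.ShortExact.moduleCat_exact_iff_function_exact _).mpr he }

/-- Two-out-of-three property of finite flat dimension along a short exact sequence,
proved using the long exact sequence of `Tor`. -/
lemma ffd_two_of_three {A B C : Type u} [AddCommGroup A] [Module R A] [AddCommGroup B]
    [Module R B] [AddCommGroup C] [Module R C] (f : A →ₗ[R] B) (g : B →ₗ[R] C)
    (hf : Function.Injective f) (hg : Function.Surjective g) (hfg : Function.Exact f g) :
    (FFD R A → FFD R B → FFD R C) ∧ (FFD R A → FFD R C → FFD R B) ∧
      (FFD R B → FFD R C → FFD R A) := by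
  let S : ShortComplex (ModuleCat.{u} R) :=
    ShortComplex.mk (ModuleCat.ofHom f) (ModuleCat.ofHom g)
      (by ext x; exact hfg.apply_apply_eq_zero x)
  have hS : S.ShortExact := by
    have : Mono S.f := (ModuleCat.mono_iff_injective _).mpr hf
    have : Epi S.g := (ModuleCat.epi_iff_surjective _).mpr hg
    exact { exact := (ShortComplex.ShortExact.moduleCat_exact_iff_function_exact S).mpr hfg }
  have flatP : ∀ (N : Type u) [AddCommGroup N] [Module R N]
      (P : ProjectiveResolution (ModuleCat.of R N)) (n : ℕ), Module.Flat R ↥(P.complex.X n) := by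
    intro N _ _ P n
    haveI : Module.Projective R ↥(P.complex.X n) :=
      (IsProjective.iff_projective _).mpr (by change Projective (P.complex.X n); infer_instance)
    infer_instance
  refine ⟨?_, ?_, ?_⟩
  · -- A, B ⟹ C
    rintro ⟨n₁, h₁⟩ ⟨n₂, h₂⟩
    refine ⟨max n₁ n₂ + 1, ?_⟩
    intro N _ _ i hi
    obtain ⟨P⟩ : Nonempty (ProjectiveResolution (ModuleCat.of R N)) := HasProjectiveResolution.out
    haveI := flatP N P
    have hSE := tensSC_shortExact S hS P.complex
    obtain ⟨j, rfl⟩ : ∃ j, i = j + 1 := ⟨i - 1, by omega⟩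
    have ex := hSE.homology_exact₃ (j + 1) j (by simp)
    refine (tor_subsingleton_iff (A := C) P (j + 1)).mpr (ex.isZero_X₂ ?_ ?_)
    · exact IsZero.eq_of_src
        ((tor_subsingleton_iff (A := B) P (j + 1)).mp (h₂ N (j + 1) (by omega))) _ _
    · exact IsZero.eq_of_tgt
        ((tor_subsingleton_iff (A := A) P j).mp (h₁ N j (by omega))) _ _
  · -- A, C ⟹ B
    rintro ⟨n₁, h₁⟩ ⟨n₃, h₃⟩
    refine ⟨max n₁ n₃, ?_⟩
    intro N _ _ i hi
    obtain ⟨P⟩ : Nonempty (ProjectiveResolution (ModuleCat.of R N)) := HasProjectiveResolution.out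
    haveI := flatP N P
    have hSE := tensSC_shortExact S hS P.complex
    have ex := hSE.homology_exact₂ i
    refine (tor_subsingleton_iff (A := B) P i).mpr (ex.isZero_X₂ ?_ ?_)
    · exact IsZero.eq_of_src
        ((tor_subsingleton_iff (A := A) P i).mp (h₁ N i (by omega))) _ _
    · exact IsZero.eq_of_tgt
        ((tor_subsingleton_iff (A := C) P i).mp (h₃ N i (by omega))) _ _
  · -- B, C ⟹ A
    rintro ⟨n₂, h₂⟩ ⟨n₃, h₃⟩
    refine ⟨max n₂ n₃, ?_⟩
    intro N _ _ i hi
    obtain ⟨P⟩ : Nonempty (ProjectiveResolution (ModuleCat.of R N)) := HasProjectiveResolution.out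
    haveI := flatP N P
    have hSE := tensSC_shortExact S hS P.complex
    have ex := hSE.homology_exact₁ (i + 1) i (by simp)
    refine (tor_subsingleton_iff (A := A) P i).mpr (ex.isZero_X₂ ?_ ?_)
    · exact IsZero.eq_of_src
        ((tor_subsingleton_iff (A := C) P (i + 1)).mp (h₃ N (i + 1) (by omega))) _ _
    · exact IsZero.eq_of_tgt
        ((tor_subsingleton_iff (A := B) P i).mp (h₂ N i (by omega))) _ _

/-- From `0 → Z_i → M_i → B_{i-1} → 0`. -/
lemma ffd_cycs (M : ChainComplex (ModuleCat.{u} R) ℤ) (i j : ℤ) (hij : j + 1 = i)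
    (hXi : FFD R ↥(M.X i)) (hB : FFD R ↥(bdries R M j)) : FFD R ↥(cycs R M i) := by
  subst hij
  have trans : ∀ p q : Submodule R (M.X (j + 1)), p = q → FFD R ↥q → FFD R ↥p := by
    rintro p q rfl h; exact h
  have ecyc : cycs R M (j + 1) = LinearMap.ker (M.d (j + 1) j).hom := by
    have key : ∀ k : ℤ, k = j →
        LinearMap.ker (M.d (j + 1) k).hom = LinearMap.ker (M.d (j + 1) j).hom := by
      rintro k rfl; rfl
    exact key (j + 1 - 1) (by ring)
  refine trans _ _ ecyc ?_
  unfold bdries at hB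
  have hfg : Function.Exact (LinearMap.ker (M.d (j + 1) j).hom).subtype
      (M.d (j + 1) j).hom.rangeRestrict := by
    rw [LinearMap.exact_iff, Submodule.range_subtype, LinearMap.ker_rangeRestrict]
  exact (ffd_two_of_three _ _ (Submodule.injective_subtype _)
    (LinearMap.surjective_rangeRestrict _) hfg).2.2 hXi hB

/-- From `0 → B_i → Z_i → H_i → 0`. -/
lemma ffd_bdries (M : ChainComplex (ModuleCat.{u} R) ℤ) (i : ℤ)
    (hZ : FFD R ↥(cycs R M i)) (hHi : FFD R (homol R M i)) : FFD R ↥(bdries R M i) := by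
  have hle : bdries R M i ≤ cycs R M i := by
    intro x hx
    obtain ⟨y, rfl⟩ := LinearMap.mem_range.mp hx
    simp only [cycs, LinearMap.mem_ker]
    show (M.d (i + 1) i ≫ M.d i (i - 1)).hom y = 0
    rw [M.d_comp_d]
    rfl
  have hfg : Function.Exact (Submodule.inclusion hle)
      (Submodule.comap (cycs R M i).subtype (bdries R M i)).mkQ := by
    rw [LinearMap.exact_iff, Submodule.ker_mkQ, Submodule.range_inclusion]
  exact (ffd_two_of_three (Submodule.inclusion hle) (Submodule.mkQ _)
    (Submodule.inclusion_injective _) (Submodule.mkQ_surjective _) hfg).2.2 hZ hHi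

/-- From `0 → B_i → M_i → M_i/B_i → 0`. -/
lemma ffd_coker (M : ChainComplex (ModuleCat.{u} R) ℤ) (i : ℤ)
    (hXi : FFD R ↥(M.X i)) (hB : FFD R ↥(bdries R M i)) :
    FFD R (↥(M.X i) ⧸ bdries R M i) := by
  have hfg : Function.Exact (bdries R M i).subtype (bdries R M i).mkQ := by
    rw [LinearMap.exact_iff, Submodule.ker_mkQ, Submodule.range_subtype]
  exact (ffd_two_of_three _ _ (Submodule.injective_subtype _)
    (Submodule.mkQ_surjective _) hfg).1 hB hXi

end FlatDimAux

open FlatDimAux in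
/-- Let `M` be a right-bounded chain complex of modules over a commutative
noetherian ring `R`. If every `H_i(M)` and every `M_i` has finite flat dimension, then
every `B_i(M)`, `Z_i(M)` and `C_i(M) = M_i/B_i(M)` has finite flat dimension. -/
theorem flatDim_cycles_bdries_coker_finite [IsNoetherianRing R]
    (M : ChainComplex (ModuleCat.{u} R) ℤ)
    (hbdd : ∃ n₀ : ℤ, ∀ i < n₀, Subsingleton (M.X i))
    (hH : ∀ i, flatDim R (homol R M i) ≠ ⊤)
    (hX : ∀ i, flatDim R (M.X i) ≠ ⊤) :
    ∀ i, flatDim R (bdries R M i) ≠ ⊤ ∧ flatDim R (cycs R M i) ≠ ⊤ ∧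
      flatDim R ((M.X i) ⧸ (bdries R M i)) ≠ ⊤ := by
  obtain ⟨n₀, hn₀⟩ := hbdd
  have hXffd : ∀ i, FFD R ↥(M.X i) := fun i => flatDim_ne_top_iff.mp (hX i)
  have hHffd : ∀ i, FFD R (homol R M i) := fun i => flatDim_ne_top_iff.mp (hH i)
  have subs : ∀ j, j < n₀ → FFD R ↥(bdries R M j) := by
    intro j hj
    haveI := hn₀ j hj
    haveI : Subsingleton ↥(bdries R M j) := ⟨fun a b => Subtype.ext (Subsingleton.elim _ _)⟩
    exact ffd_of_subsingleton _
  have key : ∀ j : ℤ, FFD R ↥(bdries R M j) := by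
    intro j
    rcases lt_or_ge j n₀ with hj | hj
    · exact subs j hj
    · have main : ∀ k : ℤ, n₀ - 1 ≤ k → FFD R ↥(bdries R M k) :=
        Int.le_induction (subs _ (by omega)) (fun k _ ih =>
          ffd_bdries M (k + 1) (ffd_cycs M (k + 1) k rfl (hXffd _) ih) (hHffd _))
      exact main j (by omega)
  intro i
  exact ⟨flatDim_ne_top_iff.mpr (key i),
    flatDim_ne_top_iff.mpr (ffd_cycs M i (i - 1) (by ring) (hXffd i) (key (i - 1))),
    flatDim_ne_top_iff.mpr (ffd_coker M i (hXffd i) (key i))⟩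
end

section
/- Let M be a left-bounded chain complex of R-modules (M_i = 0 for all i ≫ 0). If for every i the modules H_i(M) and M_i have finite injective dimension, then for every i the modules B_i(M), Z_i(M), and C_i(M) = M_i/B_i(M) all have finite injective dimension. -/
universe u

open CategoryTheory CategoryTheory.Limits CategoryTheory.Abelian

/-- Injective dimension of a module, valued in `ℕ∞`, via vanishing of `Ext`. -/
noncomputable def injDim (R : Type u) [CommRing R] (M : Type u) [AddCommGroup M]
    [Module R M] : ℕ∞ :=
  sInf {n : ℕ∞ | ∀ (N : Type u) [AddCommGroup N] [Module R N] (i : ℕ), n < (i : ℕ∞) →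
    Subsingleton (Abelian.Ext (ModuleCat.of R N) (ModuleCat.of R M) i)}

variable (R : Type u) [CommRing R]

def FID (X : ModuleCat.{u} R) : Prop :=
  ∃ n : ℕ, ∀ (N : ModuleCat.{u} R) (i : ℕ), n < i → Subsingleton (Abelian.Ext N X i)

example (N : ModuleCat.{u} R) : ModuleCat.of R N = N := rfl

lemma FID.of_subsingleton (X : ModuleCat.{u} R) [Subsingleton X] : FID R X := by
  refine ⟨0, fun N i _ => ⟨fun a b => ?_⟩⟩
  have h1 : (𝟙 X : X ⟶ X) = 0 := by ext x; exact Subsingleton.elim _ _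
  have key : ∀ c : Abelian.Ext N X i, c = 0 := fun c => by
    rw [← c.comp_mk₀_id, h1, Abelian.Ext.mk₀_zero, Abelian.Ext.comp_zero]
  rw [key a, key b]

open Abelian in
lemma FID.of_iso {X Y : ModuleCat.{u} R} (e : X ≅ Y) (h : FID R X) : FID R Y := by
  obtain ⟨n, hn⟩ := h
  refine ⟨n, fun N i hi => ⟨fun a b => ?_⟩⟩
  have := hn N i hi
  have key : ∀ β : Ext N Y i, (β.comp (Ext.mk₀ e.inv) (add_zero i)).comp
      (Ext.mk₀ e.hom) (add_zero i) = β := by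
    intro β
    rw [Ext.comp_assoc_of_third_deg_zero, Ext.mk₀_comp_mk₀, e.inv_hom_id, Ext.comp_mk₀_id]
  rw [← key a, ← key b, Subsingleton.elim (a.comp (Ext.mk₀ e.inv) (add_zero i))
    (b.comp (Ext.mk₀ e.inv) (add_zero i))]

open Abelian in
lemma FID.congr {A B : Type u} [AddCommGroup A] [Module R A] [AddCommGroup B] [Module R B]
    (e : A ≃ₗ[R] B) (h : FID R (ModuleCat.of R A)) : FID R (ModuleCat.of R B) :=
  h.of_iso R e.toModuleIso

open Abelian in
lemma fid_two {S : ShortComplex (ModuleCat.{u} R)} (hS : S.ShortExact)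
    (h1 : FID R S.X₁) (h3 : FID R S.X₃) : FID R S.X₂ := by
  obtain ⟨n1, hn1⟩ := h1
  obtain ⟨n3, hn3⟩ := h3
  refine ⟨max n1 n3, fun N i hi => ?_⟩
  have i1 := hn1 N i (lt_of_le_of_lt (le_max_left _ _) hi)
  have i3 := hn3 N i (lt_of_le_of_lt (le_max_right _ _) hi)
  have key : ∀ x : Ext N S.X₂ i, x = 0 := by
    intro x
    obtain ⟨x₁, hx₁⟩ := Ext.covariant_sequence_exact₂ N hS x (Subsingleton.elim _ _)
    rw [← hx₁, Subsingleton.elim x₁ 0, Ext.zero_comp]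
  exact ⟨fun a b => by rw [key a, key b]⟩

open Abelian in
lemma fid_three {S : ShortComplex (ModuleCat.{u} R)} (hS : S.ShortExact)
    (h1 : FID R S.X₁) (h2 : FID R S.X₂) : FID R S.X₃ := by
  obtain ⟨n1, hn1⟩ := h1
  obtain ⟨n2, hn2⟩ := h2
  refine ⟨max n1 n2, fun N i hi => ?_⟩
  have i1 := hn1 N (i + 1) (by omega)
  have i2 := hn2 N i (lt_of_le_of_lt (le_max_right _ _) hi)
  have key : ∀ x : Ext N S.X₃ i, x = 0 := by
    intro x
    obtain ⟨x₂, hx₂⟩ := Ext.covariant_sequence_exact₃ N hS x rfl (Subsingleton.elim _ _)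
    rw [← hx₂, Subsingleton.elim x₂ 0, Ext.zero_comp]
  exact ⟨fun a b => by rw [key a, key b]⟩

open Abelian in
lemma fid_one {S : ShortComplex (ModuleCat.{u} R)} (hS : S.ShortExact)
    (h2 : FID R S.X₂) (h3 : FID R S.X₃) : FID R S.X₁ := by
  obtain ⟨n2, hn2⟩ := h2
  obtain ⟨n3, hn3⟩ := h3
  refine ⟨max n2 n3 + 1, fun N i hi => ?_⟩
  obtain ⟨n₀, rfl⟩ : ∃ n₀, i = n₀ + 1 := ⟨i - 1, by omega⟩
  have i2 := hn2 N (n₀ + 1) (by omega)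
  have i3 := hn3 N n₀ (by omega)
  have key : ∀ x : Ext N S.X₁ (n₀ + 1), x = 0 := by
    intro x
    obtain ⟨x₃, hx₃⟩ := Ext.covariant_sequence_exact₁ N hS x (Subsingleton.elim _ _) rfl
    rw [← hx₃, Subsingleton.elim x₃ 0, Ext.zero_comp]
  exact ⟨fun a b => by rw [key a, key b]⟩

/-- The short exact sequence `0 → A → M → M/A → 0` in `ModuleCat R`. -/
noncomputable def subSES (M : Type u) [AddCommGroup M] [Module R M] (A : Submodule R M) :
    CategoryTheory.ShortComplex (ModuleCat.{u} R) :=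
  CategoryTheory.ShortComplex.moduleCatMk A.subtype A.mkQ (by ext ⟨x, hx⟩; simpa using hx)

lemma subSES_shortExact (M : Type u) [AddCommGroup M] [Module R M] (A : Submodule R M) :
    (subSES R M A).ShortExact := by
  refine { exact := ?_, mono_f := ?_, epi_g := ?_ }
  · rw [ShortComplex.moduleCat_exact_iff]
    intro x hx
    refine ⟨⟨x, ?_⟩, rfl⟩
    rw [show (ConcreteCategory.hom (subSES R M A).g : M →ₗ[R] M ⧸ A) = A.mkQ from rfl] at hx
    exact (Submodule.Quotient.mk_eq_zero A).mp hx
  · rw [ModuleCat.mono_iff_injective]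
    exact Subtype.val_injective
  · rw [ModuleCat.epi_iff_surjective]
    exact Submodule.mkQ_surjective A


lemma injDim_ne_top_iff (M : Type u) [AddCommGroup M] [Module R M] :
    injDim R M ≠ ⊤ ↔ FID R (ModuleCat.of R M) := by
  unfold injDim FID
  constructor
  · intro h
    rw [Ne, sInf_eq_top] at h
    push_neg at h
    obtain ⟨a, ha, hne⟩ := h
    lift a to ℕ using hne
    exact ⟨a, fun N i hi => ha N i (by exact_mod_cast hi)⟩
  · rintro ⟨n, hn⟩
    have hmem : (n : ℕ∞) ∈ {m : ℕ∞ | ∀ (N : Type u) [AddCommGroup N] [Module R N] (i : ℕ),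
        m < (i : ℕ∞) → Subsingleton (Abelian.Ext (ModuleCat.of R N) (ModuleCat.of R M) i)} :=
      fun N _ _ i hi => hn (ModuleCat.of R N) i (by exact_mod_cast hi)
    exact ne_top_of_le_ne_top (WithTop.natCast_ne_top n) (sInf_le hmem)

/-- Let `M` be a left-bounded chain complex of modules over a commutative
noetherian ring `R`. If every `H_i(M)` and every `M_i` has finite injective dimension, then
every `B_i(M)`, `Z_i(M)` and `C_i(M) = M_i/B_i(M)` has finite injective dimension. -/
theorem injDim_cycles_bdries_coker_finite [IsNoetherianRing R]
    (M : ChainComplex (ModuleCat.{u} R) ℤ)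
    (hbdd : ∃ n₀ : ℤ, ∀ i > n₀, Subsingleton (M.X i))
    (hH : ∀ i, injDim R (homol R M i) ≠ ⊤)
    (hX : ∀ i, injDim R (M.X i) ≠ ⊤) :
    ∀ i, injDim R (bdries R M i) ≠ ⊤ ∧ injDim R (cycs R M i) ≠ ⊤ ∧
      injDim R ((M.X i) ⧸ (bdries R M i)) ≠ ⊤ := by
  obtain ⟨n₀, hn₀⟩ := hbdd
  have hXf : ∀ i, FID R (M.X i) := fun i => (injDim_ne_top_iff R _).mp (hX i)
  have hHf : ∀ i, FID R (ModuleCat.of R (homol R M i)) :=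
    fun i => (injDim_ne_top_iff R _).mp (hH i)
  have cyc_succ : ∀ i : ℤ, cycs R M (i + 1) = LinearMap.ker (M.d (i + 1) i).hom := by
    intro i
    unfold cycs
    rw [← M.d_comp_XIsoOfEq_hom (show (i : ℤ) + 1 - 1 = i from by ring) (i + 1),
      ModuleCat.hom_comp, LinearMap.ker_comp]
    have hinj : Function.Injective (M.XIsoOfEq (show (i : ℤ) + 1 - 1 = i from by ring)).hom := by
      rw [← ModuleCat.mono_iff_injective]
      infer_instance
    rw [LinearMap.ker_eq_bot.mpr hinj]
    rfl
  have hBstep : ∀ i : ℤ, FID R (ModuleCat.of R (cycs R M (i + 1))) →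
      FID R (ModuleCat.of R (bdries R M i)) := by
    intro i hZ
    have hq : FID R (ModuleCat.of R (↥(M.X (i + 1)) ⧸ cycs R M (i + 1))) :=
      fid_three R (subSES_shortExact R ↥(M.X (i + 1)) (cycs R M (i + 1))) hZ (hXf (i + 1))
    rw [cyc_succ i] at hq
    exact FID.congr R (LinearMap.quotKerEquivRange (M.d (i + 1) i).hom) hq
  have hZstep : ∀ i : ℤ, FID R (ModuleCat.of R (bdries R M i)) →
      FID R (ModuleCat.of R (cycs R M i)) := by
    intro i hBi
    have hle : bdries R M i ≤ cycs R M i := by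
      rintro x ⟨y, rfl⟩
      have h0 : M.d i (i - 1) (M.d (i + 1) i y) = 0 := by
        calc M.d i (i - 1) (M.d (i + 1) i y) = (M.d (i + 1) i ≫ M.d i (i - 1)) y := rfl
        _ = (0 : M.X (i + 1) ⟶ M.X (i - 1)) y := by rw [M.d_comp_d]
        _ = 0 := rfl
      exact LinearMap.mem_ker.mpr h0
    have hsub : FID R (ModuleCat.of R
        (Submodule.comap (cycs R M i).subtype (bdries R M i))) :=
      FID.congr R (Submodule.comapSubtypeEquivOfLe hle).symm hBi
    exact fid_two R (subSES_shortExact R ↥(cycs R M i)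
      (Submodule.comap (cycs R M i).subtype (bdries R M i))) hsub (hHf i)
  have hZtop : ∀ i : ℤ, n₀ < i → FID R (ModuleCat.of R (cycs R M i)) := by
    intro i hi
    haveI := hn₀ i hi
    haveI : Subsingleton (ModuleCat.of R ↥(cycs R M i)) :=
      ⟨fun a b => Subtype.ext (Subsingleton.elim _ _)⟩
    exact FID.of_subsingleton R _
  have hZ : ∀ i : ℤ, FID R (ModuleCat.of R (cycs R M i)) := by
    have aux : ∀ k : ℕ, ∀ i : ℤ, n₀ < i + k → FID R (ModuleCat.of R (cycs R M i)) := by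
      intro k
      induction k with
      | zero => intro i hi; exact hZtop i (by simpa using hi)
      | succ k ih =>
        intro i hi
        by_cases h : n₀ < i
        · exact hZtop i h
        · exact hZstep i (hBstep i (ih (i + 1) (by omega)))
    intro i
    exact aux (n₀ - i + 1).toNat i (by omega)
  intro i
  have hBi : FID R (ModuleCat.of R (bdries R M i)) := hBstep i (hZ (i + 1))
  refine ⟨(injDim_ne_top_iff R _).mpr hBi, (injDim_ne_top_iff R _).mpr (hZ i),
    (injDim_ne_top_iff R _).mpr ?_⟩
  exact fid_three R (subSES_shortExact R ↥(M.X i) (bdries R M i)) hBi (hXf i)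
end
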